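/- arXiv:1004.0393 — 3 statements merged into one kernel-verified Lean document; each statement's English description precedes it below -/
import Mathlib

section
/- A curve Z ⊂ ℝ³ projects onto a curve X ⊂ ℝ² by a finite (central) projection if and only if there exist real numbers c₁, c₂, c₃ such that the projective curve {[z₁+c₁ : z₂+c₂ : z₃+c₃] ∈ ℙ² : (z₁,z₂,z₃) ∈ Z} is PGL(3)-equivalent to the projective closure [X] of X in ℙ². -/
/-- The left 3×3 submatrix of a 3×4 matrix. -/
def leftBlock (P : Matrix (Fin 3) (Fin 4) ℝ) : Matrix (Fin 3) (Fin 3) ℝ :=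
  fun i j => P i j.castSucc

/-- The embedding of the plane ℝ² into ℙ², (x,y) ↦ [x : y : 1]. -/
noncomputable def embedPlane (x : Fin 2 → ℝ) : Projectivization ℝ (Fin 3 → ℝ) :=
  Projectivization.mk ℝ ![x 0, x 1, 1] (by
    intro h
    have h2 := congrFun h 2
    simp at h2)

lemma mulVec_split (P : Matrix (Fin 3) (Fin 4) ℝ) (z : Fin 3 → ℝ) :
    P.mulVec ![z 0, z 1, z 2, 1] = (leftBlock P).mulVec ![z 0, z 1, z 2] + (fun i => P i 3) := by
  funext i
  simp [Matrix.mulVec, dotProduct, Fin.sum_univ_four, Fin.sum_univ_three, leftBlock,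
    show (Fin.castSucc 2 : Fin 4) = 2 from rfl, show (Fin.castSucc 1 : Fin 4) = 1 from rfl,
    show (Fin.castSucc 0 : Fin 4) = 0 from rfl]

lemma mk_congr {v w : Fin 3 → ℝ} (h : v = w) (hv : v ≠ 0) (hw : w ≠ 0) :
    Projectivization.mk ℝ v hv = Projectivization.mk ℝ w hw := by subst h; rfl

/-- Finite projection criterion: a curve Z ⊆ ℝ³ projects onto a curve X ⊆ ℝ² by a
finite (central) projection iff there exist c₁, c₂, c₃ ∈ ℝ such that the projective
curve {[z₁+c₁ : z₂+c₂ : z₃+c₃] : z ∈ Z} ⊆ ℙ² is PGL(3)-equivalent to [X]. -/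
theorem finite_projection_criterion
    (Z : Set (Fin 3 → ℝ)) (X : Set (Fin 2 → ℝ)) :
    (∃ P : Matrix (Fin 3) (Fin 4) ℝ, IsUnit (leftBlock P).det ∧
      {q : Projectivization ℝ (Fin 3 → ℝ) | ∃ z ∈ Z,
        ∃ h : P.mulVec ![z 0, z 1, z 2, 1] ≠ 0,
          q = Projectivization.mk ℝ (P.mulVec ![z 0, z 1, z 2, 1]) h}
        = embedPlane '' X) ↔
    (∃ (c₁ c₂ c₃ : ℝ) (A : Matrix (Fin 3) (Fin 3) ℝ), IsUnit A.det ∧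
      {q : Projectivization ℝ (Fin 3 → ℝ) | ∃ z ∈ Z,
        ∃ h : A.mulVec ![z 0 + c₁, z 1 + c₂, z 2 + c₃] ≠ 0,
          q = Projectivization.mk ℝ (A.mulVec ![z 0 + c₁, z 1 + c₂, z 2 + c₃]) h}
        = embedPlane '' X) := by
  constructor
  · rintro ⟨P, hdet, hset⟩
    set A := leftBlock P with hA
    set c : Fin 3 → ℝ := A⁻¹.mulVec (fun i => P i 3) with hc
    refine ⟨c 0, c 1, c 2, A, hdet, ?_⟩
    have hinv : A * A⁻¹ = 1 := Matrix.mul_nonsing_inv A hdet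
    have heq : ∀ z : Fin 3 → ℝ,
        A.mulVec ![z 0 + c 0, z 1 + c 1, z 2 + c 2] = P.mulVec ![z 0, z 1, z 2, 1] := by
      intro z
      have h1 : (![z 0 + c 0, z 1 + c 1, z 2 + c 2] : Fin 3 → ℝ) = ![z 0, z 1, z 2] + c := by
        funext j; fin_cases j <;> simp
      rw [h1, Matrix.mulVec_add, mulVec_split]
      congr 1
      rw [hc, Matrix.mulVec_mulVec, hinv, Matrix.one_mulVec]
    rw [← hset]
    ext q
    constructor
    · rintro ⟨z, hz, h, rfl⟩
      have h' : P.mulVec ![z 0, z 1, z 2, 1] ≠ 0 := by rw [← heq z]; exact h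
      exact ⟨z, hz, h', mk_congr (heq z) h h'⟩
    · rintro ⟨z, hz, h, rfl⟩
      have h' : A.mulVec ![z 0 + c 0, z 1 + c 1, z 2 + c 2] ≠ 0 := by rw [heq z]; exact h
      exact ⟨z, hz, h', mk_congr (heq z).symm h h'⟩
  · rintro ⟨c₁, c₂, c₃, A, hdet, hset⟩
    set P : Matrix (Fin 3) (Fin 4) ℝ :=
      fun i j => if h : (j : ℕ) < 3 then A i ⟨j, h⟩ else (A.mulVec ![c₁, c₂, c₃]) i with hP
    have hLB : leftBlock P = A := by
      funext i j
      simp only [leftBlock, hP]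
      rw [dif_pos (show ((j.castSucc : Fin 4) : ℕ) < 3 by simp)]
      exact congrArg (A i) (Fin.ext (by simp))
    have heq : ∀ z : Fin 3 → ℝ,
        P.mulVec ![z 0, z 1, z 2, 1] = A.mulVec ![z 0 + c₁, z 1 + c₂, z 2 + c₃] := by
      intro z
      rw [mulVec_split, hLB]
      have h1 : (![z 0 + c₁, z 1 + c₂, z 2 + c₃] : Fin 3 → ℝ)
          = ![z 0, z 1, z 2] + ![c₁, c₂, c₃] := by
        funext j; fin_cases j <;> simp
      rw [h1, Matrix.mulVec_add]
      congr 1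
    refine ⟨P, by rw [hLB]; exact hdet, ?_⟩
    rw [← hset]
    ext q
    constructor
    · rintro ⟨z, hz, h, rfl⟩
      have h' : A.mulVec ![z 0 + c₁, z 1 + c₂, z 2 + c₃] ≠ 0 := by rw [← heq z]; exact h
      exact ⟨z, hz, h', mk_congr (heq z) h h'⟩
    · rintro ⟨z, hz, h, rfl⟩
      have h' : P.mulVec ![z 0, z 1, z 2, 1] ≠ 0 := by rw [heq z]; exact h
      exact ⟨z, hz, h', mk_congr (heq z).symm h h'⟩
end

section
/- A curve Z ⊂ ℝ³ projects onto a curve X ⊂ ℝ² by an affine (parallel) projection if and only if there exist real numbers c₁, c₂ and an ordered triple (i,j,k) ∈ {(1,2,3), (1,3,2), (2,3,1)} such that the planar curve {(z_i + c₁ z_k, z_j + c₂ z_k) : (z₁,z₂,z₃) ∈ Z} is A(2)-equivalent (i.e., related by an invertible affine map of the plane) to X. -/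
lemma rank_two_of_surj' (A : Matrix (Fin 2) (Fin 3) ℝ)
    (h : Function.Surjective A.mulVec) : A.rank = 2 := by
  have : LinearMap.range A.mulVecLin = ⊤ := by
    rw [LinearMap.range_eq_top]
    simpa [Matrix.coe_mulVecLin] using h
  rw [Matrix.rank, this, finrank_top, Module.finrank_pi]
  simp

lemma surj_of_rank_two' (A : Matrix (Fin 2) (Fin 3) ℝ)
    (h : A.rank = 2) : Function.Surjective A.mulVec := by
  have : LinearMap.range A.mulVecLin = ⊤ := by
    apply Submodule.eq_top_of_finrank_eq
    rw [← Matrix.rank, h, Module.finrank_pi]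
    simp
  intro y
  obtain ⟨x, hx⟩ := (LinearMap.range_eq_top.mp this) y
  exact ⟨x, by simpa [Matrix.mulVecLin_apply] using hx⟩

lemma aux_forward' (L : Matrix (Fin 2) (Fin 3) ℝ) (v : Fin 2 → ℝ) (Z : Set (Fin 3 → ℝ))
    (i j k : Fin 3)
    (hperm : ∀ (r : Fin 2) (z : Fin 3 → ℝ),
      L r 0 * z 0 + L r 1 * z 1 + L r 2 * z 2 = L r i * z i + L r j * z j + L r k * z k)
    (hd : L 0 i * L 1 j - L 0 j * L 1 i ≠ 0) :
    ∃ (c₁ c₂ : ℝ) (M : Matrix (Fin 2) (Fin 2) ℝ) (b : Fin 2 → ℝ), IsUnit M.det ∧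
      (fun x => M.mulVec x + b) ''
        ((fun z : Fin 3 → ℝ => ![z i + c₁ * z k, z j + c₂ * z k]) '' Z)
        = (fun z => L.mulVec z + v) '' Z := by
  set d := L 0 i * L 1 j - L 0 j * L 1 i with hdef
  refine ⟨(L 1 j * L 0 k - L 0 j * L 1 k) / d, (L 0 i * L 1 k - L 1 i * L 0 k) / d,
    !![L 0 i, L 0 j; L 1 i, L 1 j], v, ?_, ?_⟩
  · rw [Matrix.det_fin_two]
    simpa using (isUnit_iff_ne_zero).mpr hd
  · rw [Set.image_image]
    apply Set.image_congr'
    intro z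
    have h0 := hperm 0 z
    have h1 := hperm 1 z
    funext r
    fin_cases r <;>
      simp only [Matrix.mulVec, dotProduct, Fin.sum_univ_two, Fin.sum_univ_three,
        Matrix.cons_val', Matrix.cons_val_zero, Matrix.cons_val_one, Matrix.head_cons,
        Matrix.empty_val', Matrix.cons_val_fin_one, Matrix.head_fin_const, Pi.add_apply,
        Matrix.of_apply, Fin.mk_zero, Fin.mk_one] <;>
      [rw [h0]; rw [h1]] <;>
      · congr 1
        field_simp
        ring

lemma minor_exists' (L : Matrix (Fin 2) (Fin 3) ℝ) (h : Function.Surjective L.mulVec) :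
    L 0 0 * L 1 1 - L 0 1 * L 1 0 ≠ 0 ∨ L 0 0 * L 1 2 - L 0 2 * L 1 0 ≠ 0 ∨
    L 0 1 * L 1 2 - L 0 2 * L 1 1 ≠ 0 := by
  by_contra hc
  push_neg at hc
  obtain ⟨h01, h02, h12⟩ := hc
  -- rows are linearly dependent
  have key : ∃ a b : ℝ, ¬(a = 0 ∧ b = 0) ∧ ∀ t : Fin 3, a * L 0 t + b * L 1 t = 0 := by
    by_cases hz : ∀ s : Fin 3, L 0 s = 0 ∧ L 1 s = 0
    · exact ⟨1, 0, by simp, fun t => by rcases hz t with ⟨e0, e1⟩; simp [e0, e1]⟩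
    · push_neg at hz
      obtain ⟨s, hs⟩ := hz
      refine ⟨L 1 s, -(L 0 s), ?_, ?_⟩
      · rintro ⟨e1, e0⟩
        exact hs (neg_eq_zero.mp e0) e1
      · intro t
        have : L 1 s * L 0 t - L 0 s * L 1 t = 0 := by
          fin_cases s <;> fin_cases t <;> simp <;> linarith
        linarith
  obtain ⟨a, b, hab, hcomb⟩ := key
  obtain ⟨x, hx⟩ := h ![a, b]
  have ha : (L.mulVec x) 0 = a := by rw [hx]; simp
  have hb : (L.mulVec x) 1 = b := by rw [hx]; simp
  have e0 : (L.mulVec x) 0 = L 0 0 * x 0 + L 0 1 * x 1 + L 0 2 * x 2 := by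
    simp [Matrix.mulVec, dotProduct, Fin.sum_univ_three]
  have e1 : (L.mulVec x) 1 = L 1 0 * x 0 + L 1 1 * x 1 + L 1 2 * x 2 := by
    simp [Matrix.mulVec, dotProduct, Fin.sum_univ_three]
  have hsq : a * a + b * b = 0 := by
    have c0 := hcomb 0
    have c1 := hcomb 1
    have c2 := hcomb 2
    have : a * (L.mulVec x) 0 + b * (L.mulVec x) 1 = 0 := by
      rw [e0, e1]; linear_combination x 0 * c0 + x 1 * c1 + x 2 * c2
    rw [ha, hb] at this
    linarith
  exact hab ⟨by nlinarith, by nlinarith⟩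

lemma aux_reverse' (M : Matrix (Fin 2) (Fin 2) ℝ) (b : Fin 2 → ℝ) (Z : Set (Fin 3 → ℝ))
    (c₁ c₂ : ℝ) (i j k : Fin 3) (hM : IsUnit M.det)
    (hperm : ∀ z : Fin 3 → ℝ, ∃ w : Fin 3 → ℝ, w i = z 0 ∧ w j = z 1 ∧ w k = 0)
    (P : Matrix (Fin 2) (Fin 3) ℝ)
    (hP : ∀ z : Fin 3 → ℝ, P.mulVec z = ![z i + c₁ * z k, z j + c₂ * z k]) :
    ∃ (L : Matrix (Fin 2) (Fin 3) ℝ) (v : Fin 2 → ℝ),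
      L.rank = 2 ∧ (fun z => L.mulVec z + v) '' Z =
        (fun x => M.mulVec x + b) ''
          ((fun z : Fin 3 → ℝ => ![z i + c₁ * z k, z j + c₂ * z k]) '' Z) := by
  refine ⟨M * P, b, ?_, ?_⟩
  · apply rank_two_of_surj'
    intro y
    obtain ⟨w, hwi, hwj, hwk⟩ := hperm ![(M⁻¹.mulVec y) 0, (M⁻¹.mulVec y) 1, 0]
    refine ⟨w, ?_⟩
    rw [← Matrix.mulVec_mulVec, hP]
    have : (![w i + c₁ * w k, w j + c₂ * w k] : Fin 2 → ℝ) = M⁻¹.mulVec y := by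
      funext r
      fin_cases r <;> simp [hwi, hwj, hwk]
    rw [this, Matrix.mulVec_mulVec, Matrix.mul_nonsing_inv _ hM, Matrix.one_mulVec]
  · rw [Set.image_image]
    apply Set.image_congr'
    intro z
    rw [← Matrix.mulVec_mulVec, hP]

/-- Affine projection criterion: Z ⊆ ℝ³ projects onto X ⊆ ℝ² by an affine (parallel)
projection iff there exist c₁, c₂ ∈ ℝ and (i,j,k) ∈ {(1,2,3),(1,3,2),(2,3,1)} such
that {(z_i + c₁ z_k, z_j + c₂ z_k) : z ∈ Z} is A(2)-equivalent to X. -/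
theorem affine_projection_criterion
    (Z : Set (Fin 3 → ℝ)) (X : Set (Fin 2 → ℝ)) :
    (∃ (L : Matrix (Fin 2) (Fin 3) ℝ) (v : Fin 2 → ℝ),
      L.rank = 2 ∧ (fun z => L.mulVec z + v) '' Z = X) ↔
    (∃ (c₁ c₂ : ℝ) (i j k : Fin 3),
      ((i, j, k) = ((0 : Fin 3), (1 : Fin 3), (2 : Fin 3)) ∨
       (i, j, k) = ((0 : Fin 3), (2 : Fin 3), (1 : Fin 3)) ∨
       (i, j, k) = ((1 : Fin 3), (2 : Fin 3), (0 : Fin 3))) ∧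
      ∃ (M : Matrix (Fin 2) (Fin 2) ℝ) (b : Fin 2 → ℝ), IsUnit M.det ∧
        (fun x => M.mulVec x + b) ''
          ((fun z : Fin 3 → ℝ => ![z i + c₁ * z k, z j + c₂ * z k]) '' Z) = X) := by
  constructor
  · rintro ⟨L, v, hrank, himg⟩
    have hsurj := surj_of_rank_two' L hrank
    rcases minor_exists' L hsurj with hd | hd | hd
    · obtain ⟨c₁, c₂, M, b, hM, heq⟩ := aux_forward' L v Z 0 1 2 (fun r z => by ring) hd
      exact ⟨c₁, c₂, 0, 1, 2, Or.inl rfl, M, b, hM, by rw [heq, himg]⟩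
    · obtain ⟨c₁, c₂, M, b, hM, heq⟩ := aux_forward' L v Z 0 2 1 (fun r z => by ring) hd
      exact ⟨c₁, c₂, 0, 2, 1, Or.inr (Or.inl rfl), M, b, hM, by rw [heq, himg]⟩
    · obtain ⟨c₁, c₂, M, b, hM, heq⟩ := aux_forward' L v Z 1 2 0 (fun r z => by ring) hd
      exact ⟨c₁, c₂, 1, 2, 0, Or.inr (Or.inr rfl), M, b, hM, by rw [heq, himg]⟩
  · rintro ⟨c₁, c₂, i, j, k, htriple, M, b, hM, himg⟩
    rcases htriple with h | h | h <;>
      injection h with hi h <;> injection h with hj hk <;> subst hi <;> subst hj <;> subst hk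
    · obtain ⟨L, v, hrank, heq⟩ := aux_reverse' M b Z c₁ c₂ 0 1 2 hM
        (fun z => ⟨![z 0, z 1, 0], by simp, by simp, by simp⟩)
        !![1, 0, c₁; 0, 1, c₂]
        (fun z => by
          funext r; fin_cases r <;>
            simp [Matrix.mulVec, dotProduct, Fin.sum_univ_three])
      exact ⟨L, v, hrank, by rw [heq, himg]⟩
    · obtain ⟨L, v, hrank, heq⟩ := aux_reverse' M b Z c₁ c₂ 0 2 1 hM
        (fun z => ⟨![z 0, 0, z 1], by simp, by simp, by simp⟩)
        !![1, c₁, 0; 0, c₂, 1]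
        (fun z => by
          funext r; fin_cases r <;>
            simp [Matrix.mulVec, dotProduct, Fin.sum_univ_three] <;> ring)
      exact ⟨L, v, hrank, by rw [heq, himg]⟩
    · obtain ⟨L, v, hrank, heq⟩ := aux_reverse' M b Z c₁ c₂ 1 2 0 hM
        (fun z => ⟨![0, z 0, z 1], by simp, by simp, by simp⟩)
        !![c₁, 1, 0; c₂, 0, 1]
        (fun z => by
          funext r; fin_cases r <;>
            simp [Matrix.mulVec, dotProduct, Fin.sum_univ_three] <;> ring)
      exact ⟨L, v, hrank, by rw [heq, himg]⟩
end

section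
/- A curve Z ⊂ ℝ³ projects onto a curve X ⊂ ℝ² by an affine projection if and only if there exist b, c, f ∈ ℝ such that X is A(2)-equivalent to one of the following planar curves: (A) {(z₂, z₃) : (z₁,z₂,z₃) ∈ Z}; (B) {(z₁ + b·z₂, z₃) : (z₁,z₂,z₃) ∈ Z}; or (C) {(z₁ + c·z₃, z₂ + f·z₃) : (z₁,z₂,z₃) ∈ Z}. -/
private lemma surj2 (M : Matrix (Fin 2) (Fin 2) ℝ) (h : IsUnit M.det) :
    Function.Surjective M.mulVec := fun y =>
  ⟨M⁻¹.mulVec y, by rw [Matrix.mulVec_mulVec, Matrix.mul_nonsing_inv _ h, Matrix.one_mulVec]⟩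

private lemma rank_two_iff (L : Matrix (Fin 2) (Fin 3) ℝ) :
    L.rank = 2 ↔ Function.Surjective L.mulVec := by
  have hc : ⇑L.mulVecLin = L.mulVec := funext fun v => Matrix.mulVecLin_apply _ _
  rw [Matrix.rank]
  constructor
  · intro h
    have ht : LinearMap.range L.mulVecLin = ⊤ := by
      apply Submodule.eq_top_of_finrank_eq
      simp [h]
    rw [← hc]
    exact LinearMap.range_eq_top.mp ht
  · intro h
    rw [LinearMap.range_eq_top.mpr (hc ▸ h)]
    simp

private lemma not_surj (L : Matrix (Fin 2) (Fin 3) ℝ)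
    (h01 : L 0 0 * L 1 1 - L 1 0 * L 0 1 = 0)
    (h02 : L 0 0 * L 1 2 - L 1 0 * L 0 2 = 0)
    (h12 : L 0 1 * L 1 2 - L 1 1 * L 0 2 = 0) :
    ¬ Function.Surjective L.mulVec := by
  intro hs
  obtain ⟨a, ha⟩ := hs ![1, 0]
  obtain ⟨b, hb⟩ := hs ![0, 1]
  have ha0 := congrFun ha 0
  have ha1 := congrFun ha 1
  have hb0 := congrFun hb 0
  have hb1 := congrFun hb 1
  simp [Matrix.mulVec, dotProduct, Fin.sum_univ_three] at ha0 ha1 hb0 hb1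
  have : (1:ℝ) = 0 := by
    linear_combination (-(L 1 0 * b 0 + L 1 1 * b 1 + L 1 2 * b 2)) * ha0
      + (L 0 0 * b 0 + L 0 1 * b 1 + L 0 2 * b 2) * ha1 - hb1
      + (a 0 * b 1 - a 1 * b 0) * h01 + (a 0 * b 2 - a 2 * b 0) * h02
      + (a 1 * b 2 - a 2 * b 1) * h12
  exact one_ne_zero this

private lemma image_eq {g : (Fin 3 → ℝ) → (Fin 2 → ℝ)} (M : Matrix (Fin 2) (Fin 2) ℝ)
    (w : Fin 2 → ℝ) (L : Matrix (Fin 2) (Fin 3) ℝ) (v : Fin 2 → ℝ) (Z : Set (Fin 3 → ℝ))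
    (h : ∀ z, M.mulVec (g z) + w = L.mulVec z + v) :
    (fun x => M.mulVec x + w) '' (g '' Z) = (fun z => L.mulVec z + v) '' Z := by
  rw [Set.image_image]
  exact Set.image_congr' h

/-- Reduced affine projection criterion: Z ⊆ ℝ³ projects onto X ⊆ ℝ² by an affine
projection iff there exist b, c, f ∈ ℝ such that X is A(2)-equivalent to one of
(A) {(z₂,z₃)}, (B) {(z₁+b·z₂, z₃)}, or (C) {(z₁+c·z₃, z₂+f·z₃)}. -/
theorem reduced_affine_projection_criterion
    (Z : Set (Fin 3 → ℝ)) (X : Set (Fin 2 → ℝ)) :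
    (∃ (L : Matrix (Fin 2) (Fin 3) ℝ) (v : Fin 2 → ℝ),
      L.rank = 2 ∧ (fun z => L.mulVec z + v) '' Z = X) ↔
    (∃ b c f : ℝ,
      (∃ (M : Matrix (Fin 2) (Fin 2) ℝ) (w : Fin 2 → ℝ), IsUnit M.det ∧
        (fun x => M.mulVec x + w) ''
          ((fun z : Fin 3 → ℝ => ![z 1, z 2]) '' Z) = X) ∨
      (∃ (M : Matrix (Fin 2) (Fin 2) ℝ) (w : Fin 2 → ℝ), IsUnit M.det ∧
        (fun x => M.mulVec x + w) ''
          ((fun z : Fin 3 → ℝ => ![z 0 + b * z 1, z 2]) '' Z) = X) ∨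
      (∃ (M : Matrix (Fin 2) (Fin 2) ℝ) (w : Fin 2 → ℝ), IsUnit M.det ∧
        (fun x => M.mulVec x + w) ''
          ((fun z : Fin 3 → ℝ => ![z 0 + c * z 2, z 1 + f * z 2]) '' Z) = X)) := by
  constructor
  · rintro ⟨L, v, hrank, hX⟩
    have hsurj := (rank_two_iff L).mp hrank
    by_cases h01 : L 0 0 * L 1 1 - L 1 0 * L 0 1 = 0
    · by_cases h00 : L 0 0 = 0 ∧ L 1 0 = 0
      · -- Case A : first column is zero
        have h12 : L 0 1 * L 1 2 - L 1 1 * L 0 2 ≠ 0 := by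
          intro h
          exact not_surj L h01 (by rw [h00.1, h00.2]; ring) h hsurj
        refine ⟨0, 0, 0, Or.inl ⟨!![L 0 1, L 0 2; L 1 1, L 1 2], v, ?_, ?_⟩⟩
        · rw [show (!![L 0 1, L 0 2; L 1 1, L 1 2]).det
              = L 0 1 * L 1 2 - L 1 1 * L 0 2 by simp [Matrix.det_fin_two_of]; ring]
          exact isUnit_iff_ne_zero.mpr h12
        · rw [← hX]
          apply image_eq
          intro z
          congr 1
          funext i
          fin_cases i <;>
            simp [Matrix.mulVec, dotProduct, Fin.sum_univ_three, Fin.sum_univ_two,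
              h00.1, h00.2]
      · -- Case B : first column nonzero, second column multiple of first
        obtain ⟨b, hb0, hb1⟩ : ∃ b : ℝ, L 0 1 = b * L 0 0 ∧ L 1 1 = b * L 1 0 := by
          by_cases hL : L 0 0 = 0
          · have hL1 : L 1 0 ≠ 0 := fun h => h00 ⟨hL, h⟩
            refine ⟨L 1 1 / L 1 0, ?_, by field_simp⟩
            have : L 1 0 * L 0 1 = 0 := by linear_combination -h01 + L 1 1 * hL
            rcases mul_eq_zero.mp this with h | h
            · exact absurd h hL1
            · rw [h, hL]; ring
          · refine ⟨L 0 1 / L 0 0, by field_simp, ?_⟩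
            rw [div_mul_eq_mul_div, eq_div_iff hL]
            linear_combination h01
        have h02 : L 0 0 * L 1 2 - L 1 0 * L 0 2 ≠ 0 := by
          intro h
          refine not_surj L h01 h ?_ hsurj
          linear_combination b * h + L 1 2 * hb0 - L 0 2 * hb1
        refine ⟨b, 0, 0, Or.inr (Or.inl ⟨!![L 0 0, L 0 2; L 1 0, L 1 2], v, ?_, ?_⟩)⟩
        · rw [show (!![L 0 0, L 0 2; L 1 0, L 1 2]).det
              = L 0 0 * L 1 2 - L 1 0 * L 0 2 by simp [Matrix.det_fin_two_of]; ring]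
          exact isUnit_iff_ne_zero.mpr h02
        · rw [← hX]
          apply image_eq
          intro z
          congr 1
          funext i
          fin_cases i <;>
            (simp [Matrix.mulVec, dotProduct, Fin.sum_univ_three, Fin.sum_univ_two,
              hb0, hb1]; try ring)
    · -- Case C : first two columns independent
      refine ⟨0, (L 0 2 * L 1 1 - L 1 2 * L 0 1) / (L 0 0 * L 1 1 - L 1 0 * L 0 1),
        (L 0 0 * L 1 2 - L 1 0 * L 0 2) / (L 0 0 * L 1 1 - L 1 0 * L 0 1),
        Or.inr (Or.inr ⟨!![L 0 0, L 0 1; L 1 0, L 1 1], v, ?_, ?_⟩)⟩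
      · rw [show (!![L 0 0, L 0 1; L 1 0, L 1 1]).det
            = L 0 0 * L 1 1 - L 1 0 * L 0 1 by simp [Matrix.det_fin_two_of]; ring]
        exact isUnit_iff_ne_zero.mpr h01
      · rw [← hX]
        apply image_eq
        intro z
        congr 1
        funext i
        fin_cases i <;>
          (simp [Matrix.mulVec, dotProduct, Fin.sum_univ_three, Fin.sum_univ_two];
           have h01' : L 0 0 * L 1 1 - L 0 1 * L 1 0 ≠ 0 := fun h => h01 (by linarith);
           have h01'' : -(L 1 0 * L 0 1) + L 1 1 * L 0 0 ≠ 0 := fun h => h01 (by linarith);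
           have key : (L 0 0 * L 1 1 - L 1 0 * L 0 1) * (L 0 0 * L 1 1 - L 1 0 * L 0 1)⁻¹ = 1 := mul_inv_cancel₀ h01;
           field_simp; first | ring1 | linear_combination (L 1 2 * z 2) * key)
  · rintro ⟨b, c, f, (⟨M, w, hM, hX⟩ | ⟨M, w, hM, hX⟩ | ⟨M, w, hM, hX⟩)⟩
    · refine ⟨M * (!![0, 1, 0; 0, 0, 1] : Matrix (Fin 2) (Fin 3) ℝ), w, ?_, ?_⟩
      · refine (rank_two_iff _).mpr ?_
        have hP : Function.Surjective (!![0, 1, 0; 0, 0, 1] :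
            Matrix (Fin 2) (Fin 3) ℝ).mulVec := by
          intro y
          refine ⟨![0, y 0, y 1], ?_⟩
          funext i
          fin_cases i <;> simp [Matrix.mulVec, dotProduct, Fin.sum_univ_three]
        intro y
        obtain ⟨x, hx⟩ := surj2 M hM y
        obtain ⟨z, hz⟩ := hP x
        exact ⟨z, by rw [← Matrix.mulVec_mulVec, hz, hx]⟩
      · rw [← hX]
        symm
        apply image_eq
        intro z
        rw [← Matrix.mulVec_mulVec]
        congr 2
        funext i
        fin_cases i <;> simp [Matrix.mulVec, dotProduct, Fin.sum_univ_three]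
    · refine ⟨M * (!![1, b, 0; 0, 0, 1] : Matrix (Fin 2) (Fin 3) ℝ), w, ?_, ?_⟩
      · refine (rank_two_iff _).mpr ?_
        have hP : Function.Surjective (!![1, b, 0; 0, 0, 1] :
            Matrix (Fin 2) (Fin 3) ℝ).mulVec := by
          intro y
          refine ⟨![y 0, 0, y 1], ?_⟩
          funext i
          fin_cases i <;> simp [Matrix.mulVec, dotProduct, Fin.sum_univ_three]
        intro y
        obtain ⟨x, hx⟩ := surj2 M hM y
        obtain ⟨z, hz⟩ := hP x
        exact ⟨z, by rw [← Matrix.mulVec_mulVec, hz, hx]⟩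
      · rw [← hX]
        symm
        apply image_eq
        intro z
        rw [← Matrix.mulVec_mulVec]
        congr 2
        funext i
        fin_cases i <;> simp [Matrix.mulVec, dotProduct, Fin.sum_univ_three]
    · refine ⟨M * (!![1, 0, c; 0, 1, f] : Matrix (Fin 2) (Fin 3) ℝ), w, ?_, ?_⟩
      · refine (rank_two_iff _).mpr ?_
        have hP : Function.Surjective (!![1, 0, c; 0, 1, f] :
            Matrix (Fin 2) (Fin 3) ℝ).mulVec := by
          intro y
          refine ⟨![y 0, y 1, 0], ?_⟩
          funext i
          fin_cases i <;> simp [Matrix.mulVec, dotProduct, Fin.sum_univ_three]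
        intro y
        obtain ⟨x, hx⟩ := surj2 M hM y
        obtain ⟨z, hz⟩ := hP x
        exact ⟨z, by rw [← Matrix.mulVec_mulVec, hz, hx]⟩
      · rw [← hX]
        symm
        apply image_eq
        intro z
        rw [← Matrix.mulVec_mulVec]
        congr 2
        funext i
        fin_cases i <;> simp [Matrix.mulVec, dotProduct, Fin.sum_univ_three]
end
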